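/- Let 0 < q10 < q11 < 1, q01 := 1 − q11, q00 := 1 − q10, and suppose q01 ≤ q10 < q* < q00 ≤ q11 and q10 ≠ q01. Define the translated equilibrium points T := (q10, q11), F := (q10 − q10·q*/q01 + q*, q01·(q00 − q*)/q10 + q*), T1 := (q*, (q11 − q10)(1 − q*)/q00 + q*), T0 := (q10·q*/q11, q*), F1 := (q*, (q11 − q10)(1 − q*)·q01/(q11·q10) + q*), F0 := (q* − (q11 − q10)·q10·q*/(q00·q01), q*), and Q := (q*, q*). Then: (i) T is an extreme point of the convex hull of {T, F, T1, T0, F1, F0, Q}; (ii) if instead q* = q00 (still q10 ≠ q01), then T lies on the line segment with endpoints T1 and F; (iii) if instead q00 < q* < q11, then T is an extreme point of the convex hull of {T, T1, T0, F1, Q}. -/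

import Mathlib

noncomputable section

lemma extreme_of_strict_max {E : Type*} [AddCommGroup E] [Module ℝ E] {s : Set E} {x : E}
    (l : E →ₗ[ℝ] ℝ) (hx : x ∈ s) (h : ∀ y ∈ s, y ≠ x → l y < l x) :
    x ∈ Set.extremePoints ℝ (convexHull ℝ s) := by
  have hle : ∀ z ∈ convexHull ℝ s, l z ≤ l x := by
    intro z hz
    have hsub : convexHull ℝ s ⊆ {z | l z ≤ l x} :=
      convexHull_min (fun y hy => by
        by_cases hyx : y = x
        · simp [hyx]
        · exact (h y hy hyx).le) (convex_halfSpace_le (LinearMap.isLinear l) _)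
    exact hsub hz
  have heq : ∀ z ∈ convexHull ℝ s, l z = l x → z = x := by
    intro z hz hlz
    rw [convexHull_eq] at hz
    obtain ⟨ι, t, w, p, hw0, hw1, hps, hcen⟩ := hz
    rw [Finset.centerMass_eq_of_sum_1 _ _ hw1] at hcen
    have key : ∀ i ∈ t, w i • p i = w i • x := by
      intro i hi
      rcases eq_or_ne (p i) x with hpi | hpi
      · rw [hpi]
      rcases (hw0 i hi).eq_or_lt with hwi | hwi
      · rw [← hwi]; simp
      exfalso
      have hlt : ∑ j ∈ t, w j * l (p j) < ∑ j ∈ t, w j * l x := by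
        refine Finset.sum_lt_sum (fun j hj => mul_le_mul_of_nonneg_left ?_ (hw0 j hj)) ⟨i, hi, ?_⟩
        · by_cases hj' : p j = x
          · rw [hj']
          · exact (h _ (hps j hj) hj').le
        · exact mul_lt_mul_of_pos_left (h _ (hps i hi) hpi) hwi
      rw [← Finset.sum_mul, hw1, one_mul] at hlt
      have hzz : l z = ∑ j ∈ t, w j * l (p j) := by
        rw [← hcen, map_sum]
        simp [smul_eq_mul]
      rw [hzz] at hlz
      exact absurd hlz (ne_of_lt hlt)
    calc z = ∑ i ∈ t, w i • p i := hcen.symm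
    _ = ∑ i ∈ t, w i • x := Finset.sum_congr rfl key
    _ = (∑ i ∈ t, w i) • x := by rw [Finset.sum_smul]
    _ = x := by rw [hw1, one_smul]
  rw [mem_extremePoints]
  refine ⟨subset_convexHull ℝ s hx, fun x₁ h₁ x₂ h₂ hseg => ?_⟩
  obtain ⟨a, b, ha, hb, hab, hsum⟩ := hseg
  have e1 : l x₁ ≤ l x := hle _ h₁
  have e2 : l x₂ ≤ l x := hle _ h₂
  have hx' : l x = a * l x₁ + b * l x₂ := by
    rw [← hsum, map_add, map_smul, map_smul]; rfl
  have habl : a * l x + b * l x = l x := by rw [← add_mul, hab, one_mul]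
  have f1 : l x₁ = l x := by
    by_contra hne1
    have h1' : l x₁ < l x := lt_of_le_of_ne e1 hne1
    linarith [mul_lt_mul_of_pos_left h1' ha, mul_le_mul_of_nonneg_left e2 hb.le]
  have f2 : l x₂ = l x := by
    by_contra hne2
    have h2' : l x₂ < l x := lt_of_le_of_ne e2 hne2
    linarith [mul_lt_mul_of_pos_left h2' hb, mul_le_mul_of_nonneg_left e1 ha.le]
  exact ⟨heq _ h₁ f1, heq _ h₂ f2⟩

/-- Translated truth-telling equilibrium `T = (q10, q11)`. -/
def Tpt (q10 q11 : ℝ) : ℝ × ℝ := (q10, q11)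

/-- Translated lying equilibrium
`F = (q10 − q10·q*/q01 + q*, q01·(q00 − q*)/q10 + q*)`. -/
def Fpt (q10 q11 qs : ℝ) : ℝ × ℝ :=
  (q10 - q10 * qs / (1 - q11) + qs, (1 - q11) * ((1 - q10) - qs) / q10 + qs)

/-- Translated equilibrium `T1 = (q*, (q11 − q10)(1 − q*)/q00 + q*)`. -/
def T1pt (q10 q11 qs : ℝ) : ℝ × ℝ := (qs, (q11 - q10) * (1 - qs) / (1 - q10) + qs)

/-- Translated equilibrium `T0 = (q10·q*/q11, q*)`. -/
def T0pt (q10 q11 qs : ℝ) : ℝ × ℝ := (q10 * qs / q11, qs)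

/-- Translated equilibrium `F1 = (q*, (q11 − q10)(1 − q*)·q01/(q11·q10) + q*)`. -/
def F1pt (q10 q11 qs : ℝ) : ℝ × ℝ :=
  (qs, (q11 - q10) * (1 - qs) * (1 - q11) / (q11 * q10) + qs)

/-- Translated equilibrium `F0 = (q* − (q11 − q10)·q10·q*/(q00·q01), q*)`. -/
def F0pt (q10 q11 qs : ℝ) : ℝ × ℝ :=
  (qs - (q11 - q10) * q10 * qs / ((1 - q10) * (1 - q11)), qs)

/-- Translated full-support equilibrium `Q = (q*, q*)`. -/
def Qpt (qs : ℝ) : ℝ × ℝ := (qs, qs)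

set_option maxHeartbeats 2000000 in
/-- **Truth-telling is extremal among translated informative equilibria (Lemma 5.6).**
With `q01 = 1 − q11 ≤ q10`, `q10 ≠ q01` and `q10 < q* < q11`:
(i) if `q* < q00 = 1 − q10`, then `T` is an extreme point of the convex hull of the seven
translated equilibria `{T, F, T1, T0, F1, F0, Q}`;
(ii) if `q* = q00`, then `T` lies on the segment from `T1` to `F`;
(iii) if `q00 < q*`, then `T` is an extreme point of the convex hull of `{T, T1, T0, F1, Q}`. -/
theorem truthtelling_extreme_point (q10 q11 qs : ℝ)
    (hq10 : 0 < q10) (hcorr : q10 < q11) (hq11 : q11 < 1)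
    (h01le : 1 - q11 ≤ q10) (hne : q10 ≠ 1 - q11)
    (hqs1 : q10 < qs) (hqs2 : qs < q11) :
    (qs < 1 - q10 →
      Tpt q10 q11 ∈ Set.extremePoints ℝ (convexHull ℝ
        ({Tpt q10 q11, Fpt q10 q11 qs, T1pt q10 q11 qs, T0pt q10 q11 qs,
          F1pt q10 q11 qs, F0pt q10 q11 qs, Qpt qs} : Set (ℝ × ℝ)))) ∧
    (qs = 1 - q10 →
      Tpt q10 q11 ∈ segment ℝ (T1pt q10 q11 qs) (Fpt q10 q11 qs)) ∧
    (1 - q10 < qs →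
      Tpt q10 q11 ∈ Set.extremePoints ℝ (convexHull ℝ
        ({Tpt q10 q11, T1pt q10 q11 qs, T0pt q10 q11 qs, F1pt q10 q11 qs, Qpt qs} :
          Set (ℝ × ℝ)))) := by

  have hb : (0:ℝ) < 1 - q11 := by linarith
  have ha : (0:ℝ) < 1 - q10 := by linarith
  have h01 : 1 - q11 < q10 := lt_of_le_of_ne h01le (Ne.symm hne)
  have hqsp : (0:ℝ) < qs := lt_trans hq10 hqs1
  have h11p : (0:ℝ) < q11 := lt_trans hq10 hcorr
  have h1qs : (0:ℝ) < 1 - qs := by linarith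
  have hq10' : q10 ≠ 0 := ne_of_gt hq10
  have hq11' : q11 ≠ 0 := ne_of_gt h11p
  have hqs' : qs ≠ 0 := ne_of_gt hqsp
  have hb' : (1:ℝ) - q11 ≠ 0 := ne_of_gt hb
  have ha' : (1:ℝ) - q10 ≠ 0 := ne_of_gt ha
  refine ⟨fun hcase => ?_, fun hcase => ?_, fun hcase => ?_⟩
  · -- case (i) : qs < 1 - q10, functional l (x, y) = y - ((1-q11)/qs) * x
    refine extreme_of_strict_max
      (LinearMap.snd ℝ ℝ ℝ - ((1 - q11)/qs) • LinearMap.fst ℝ ℝ ℝ)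
      (Set.mem_insert _ _) ?_
    intro y hy hney
    simp only [Set.mem_insert_iff, Set.mem_singleton_iff] at hy
    rcases hy with rfl | rfl | rfl | rfl | rfl | rfl | rfl
    · exact absurd rfl hney
    · -- F
      simp only [Fpt, Tpt, LinearMap.sub_apply, LinearMap.smul_apply, LinearMap.fst_apply,
        LinearMap.snd_apply, smul_eq_mul]
      have e : (q11 - (1 - q11)/qs * q10) -
          (((1 - q11) * ((1 - q10) - qs) / q10 + qs)
            - (1 - q11)/qs * (q10 - q10 * qs / (1 - q11) + qs))
          = (q10 - (1 - q11)) * ((1 - q10) - qs) / q10 := by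
        field_simp
        ring
      have hpos : 0 < (q10 - (1 - q11)) * ((1 - q10) - qs) / q10 :=
        div_pos (mul_pos (by linarith) (by linarith)) hq10
      linarith [e, hpos]
    · -- T1
      simp only [T1pt, Tpt, LinearMap.sub_apply, LinearMap.smul_apply, LinearMap.fst_apply,
        LinearMap.snd_apply, smul_eq_mul]
      have e : (q11 - (1 - q11)/qs * q10) -
          (((q11 - q10) * (1 - qs) / (1 - q10) + qs) - (1 - q11)/qs * qs)
          = (qs - q10) * (1 - q11) * ((1 - q10) - qs) / (qs * (1 - q10)) := by
        field_simp
        ring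
      have hpos : 0 < (qs - q10) * (1 - q11) * ((1 - q10) - qs) / (qs * (1 - q10)) :=
        div_pos (mul_pos (mul_pos (by linarith) hb) (by linarith)) (mul_pos hqsp ha)
      linarith [e, hpos]
    · -- T0
      simp only [T0pt, Tpt, LinearMap.sub_apply, LinearMap.smul_apply, LinearMap.fst_apply,
        LinearMap.snd_apply, smul_eq_mul]
      have e : (q11 - (1 - q11)/qs * q10) - (qs - (1 - q11)/qs * (q10 * qs / q11))
          = (q11 - qs) * (qs * q11 - (1 - q11) * q10) / (qs * q11) := by
        field_simp
      have hnum : 0 < qs * q11 - (1 - q11) * q10 := by nlinarith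
      have hpos : 0 < (q11 - qs) * (qs * q11 - (1 - q11) * q10) / (qs * q11) :=
        div_pos (mul_pos (by linarith) hnum) (mul_pos hqsp h11p)
      linarith [e, hpos]
    · -- F1
      simp only [F1pt, Tpt, LinearMap.sub_apply, LinearMap.smul_apply, LinearMap.fst_apply,
        LinearMap.snd_apply, smul_eq_mul]
      have e : (q11 - (1 - q11)/qs * q10) -
          (((q11 - q10) * (1 - qs) * (1 - q11) / (q11 * q10) + qs) - (1 - q11)/qs * qs)
          = ((1 - q11) * (q11 * q10) * ((qs - q10) * ((1 - q10) - qs))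
              + qs * ((q11 - q10) * (1 - qs)) * (q10 * q11 - (1 - q10) * (1 - q11)))
            / ((1 - q10) * (qs * q11 * q10)) := by
        field_simp
        ring
      have h1 : 0 < (1 - q11) * (q11 * q10) * ((qs - q10) * ((1 - q10) - qs)) :=
        mul_pos (mul_pos hb (mul_pos h11p hq10)) (mul_pos (by linarith) (by linarith))
      have h2 : 0 < qs * ((q11 - q10) * (1 - qs)) * (q10 * q11 - (1 - q10) * (1 - q11)) := by
        have : (0:ℝ) < q10 * q11 - (1 - q10) * (1 - q11) := by nlinarith
        exact mul_pos (mul_pos hqsp (mul_pos (by linarith) h1qs)) this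
      have hpos : 0 < ((1 - q11) * (q11 * q10) * ((qs - q10) * ((1 - q10) - qs))
              + qs * ((q11 - q10) * (1 - qs)) * (q10 * q11 - (1 - q10) * (1 - q11)))
            / ((1 - q10) * (qs * q11 * q10)) :=
        div_pos (by linarith) (mul_pos ha (mul_pos (mul_pos hqsp h11p) hq10))
      linarith [e, hpos]
    · -- F0
      simp only [F0pt, Tpt, LinearMap.sub_apply, LinearMap.smul_apply, LinearMap.fst_apply,
        LinearMap.snd_apply, smul_eq_mul]
      have e : (q11 - (1 - q11)/qs * q10) -
          (qs - (1 - q11)/qs * (qs - (q11 - q10) * q10 * qs / ((1 - q10) * (1 - q11))))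
          = ((1 - q10) - qs) * (qs * (1 - q10) - q10 * (1 - q11)) / (qs * (1 - q10)) := by
        field_simp
        ring
      have hnum : 0 < qs * (1 - q10) - q10 * (1 - q11) := by nlinarith
      have hpos : 0 < ((1 - q10) - qs) * (qs * (1 - q10) - q10 * (1 - q11)) / (qs * (1 - q10)) :=
        div_pos (mul_pos (by linarith) hnum) (mul_pos hqsp ha)
      linarith [e, hpos]
    · -- Q
      simp only [Qpt, Tpt, LinearMap.sub_apply, LinearMap.smul_apply, LinearMap.fst_apply,
        LinearMap.snd_apply, smul_eq_mul]
      have e : (q11 - (1 - q11)/qs * q10) - (qs - (1 - q11)/qs * qs)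
          = ((q11 - qs) * qs + (1 - q11) * (qs - q10)) / qs := by
        field_simp
        ring
      have hpos : 0 < ((q11 - qs) * qs + (1 - q11) * (qs - q10)) / qs :=
        div_pos (by nlinarith) hqsp
      linarith [e, hpos]
  · -- case (ii) : qs = 1 - q10, T on segment [T1, F]
    subst hcase
    refine ⟨(q10 + q11 - 1) * (1 - q10) / ((q11 - q10) * q10),
      (1 - q11) * (1 - 2 * q10) / ((q11 - q10) * q10), ?_, ?_, ?_, ?_⟩
    · exact div_nonneg (mul_nonneg (by linarith) (by linarith))
        (le_of_lt (mul_pos (by linarith) hq10))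
    · exact div_nonneg (mul_nonneg (by linarith) (by linarith))
        (le_of_lt (mul_pos (by linarith) hq10))
    · have hd : (q11 - q10) * q10 ≠ 0 := ne_of_gt (mul_pos (by linarith) hq10)
      rw [← add_div, div_eq_one_iff_eq hd]
      ring
    · have hd : (q11 - q10) * q10 ≠ 0 := ne_of_gt (mul_pos (by linarith) hq10)
      simp only [T1pt, Fpt, Tpt, Prod.smul_mk, smul_eq_mul, Prod.mk_add_mk, Prod.mk.injEq]
      have hd2 : q11 - q10 ≠ 0 := sub_ne_zero.mpr (ne_of_gt hcorr)
      constructor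
      · field_simp
        ring
      · field_simp
        ring
  · -- case (iii) : 1 - q10 < qs, functional l (x, y) = y - x
    refine extreme_of_strict_max
      (LinearMap.snd ℝ ℝ ℝ - (1:ℝ) • LinearMap.fst ℝ ℝ ℝ)
      (Set.mem_insert _ _) ?_
    intro y hy hney
    simp only [Set.mem_insert_iff, Set.mem_singleton_iff] at hy
    rcases hy with rfl | rfl | rfl | rfl | rfl
    · exact absurd rfl hney
    · -- T1
      simp only [T1pt, Tpt, LinearMap.sub_apply, LinearMap.smul_apply, LinearMap.fst_apply,
        LinearMap.snd_apply, smul_eq_mul]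
      have e : (q11 - 1 * q10) - (((q11 - q10) * (1 - qs) / (1 - q10) + qs) - 1 * qs)
          = (qs - q10) * (q11 - q10) / (1 - q10) := by
        field_simp
        ring
      have hpos : 0 < (qs - q10) * (q11 - q10) / (1 - q10) :=
        div_pos (mul_pos (by linarith) (by linarith)) ha
      linarith [e, hpos]
    · -- T0
      simp only [T0pt, Tpt, LinearMap.sub_apply, LinearMap.smul_apply, LinearMap.fst_apply,
        LinearMap.snd_apply, smul_eq_mul]
      have e : (q11 - 1 * q10) - (qs - 1 * (q10 * qs / q11))
          = (q11 - qs) * (q11 - q10) / q11 := by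
        field_simp
      have hpos : 0 < (q11 - qs) * (q11 - q10) / q11 :=
        div_pos (mul_pos (by linarith) (by linarith)) h11p
      linarith [e, hpos]
    · -- F1
      simp only [F1pt, Tpt, LinearMap.sub_apply, LinearMap.smul_apply, LinearMap.fst_apply,
        LinearMap.snd_apply, smul_eq_mul]
      have e : (q11 - 1 * q10) - (((q11 - q10) * (1 - qs) * (1 - q11) / (q11 * q10) + qs) - 1 * qs)
          = ((q11 - q10) * (q11 * q10 * (qs - q10)
              + (1 - qs) * (q10 * q11 - (1 - q10) * (1 - q11)))) / ((1 - q10) * (q11 * q10)) := by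
        field_simp
        ring
      have hnum : 0 < q11 * q10 * (qs - q10) + (1 - qs) * (q10 * q11 - (1 - q10) * (1 - q11)) := by
        have h1 : 0 < q11 * q10 * (qs - q10) := mul_pos (mul_pos h11p hq10) (by linarith)
        have h2 : 0 ≤ (1 - qs) * (q10 * q11 - (1 - q10) * (1 - q11)) := by nlinarith
        linarith
      have hpos : 0 < ((q11 - q10) * (q11 * q10 * (qs - q10)
              + (1 - qs) * (q10 * q11 - (1 - q10) * (1 - q11)))) / ((1 - q10) * (q11 * q10)) :=
        div_pos (mul_pos (by linarith) hnum) (mul_pos ha (mul_pos h11p hq10))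
      linarith [e, hpos]
    · -- Q
      simp only [Qpt, Tpt, LinearMap.sub_apply, LinearMap.smul_apply, LinearMap.fst_apply,
        LinearMap.snd_apply, smul_eq_mul]
      linarith
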